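/- Let X be a cubespace that has (s+1)-uniqueness and k-completion for all k (a nilspace of degree s), and let k ≥ s+1. Then a configuration c : {0,1}^k → X lies in C^k(X) if and only if every face of c of dimension s+1 lies in C^{s+1}(X). -/

import Mathlib

/-- A morphism of discrete cubes `{0,1}^k → {0,1}^ℓ`: each coordinate function is
identically `0`, identically `1`, equal to `ω_j`, or equal to `1 - ω_j`. -/
def IsCubeMorphism {k l : ℕ} (ρ : (Fin k → Bool) → (Fin l → Bool)) : Prop :=
  ∀ i : Fin l, (∀ ω, ρ ω i = false) ∨ (∀ ω, ρ ω i = true) ∨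
    (∃ j, ∀ ω, ρ ω i = ω j) ∨ (∃ j, ∀ ω, ρ ω i = !(ω j))

/-- A cubespace: a set `X` with cube sets `C^k(X) ⊆ X^{{0,1}^k}`, with `C^0(X) = X`,
closed under precomposition with morphisms of discrete cubes. -/
structure Cubespace (X : Type*) where
  C : ∀ k : ℕ, Set ((Fin k → Bool) → X)
  C_zero : C 0 = Set.univ
  C_morph : ∀ {k l : ℕ} (ρ : (Fin k → Bool) → (Fin l → Bool)),
    IsCubeMorphism ρ → ∀ c ∈ C l, (c ∘ ρ) ∈ C k

/-- The top vertex `(1,…,1)` of the discrete cube `{0,1}^k`. -/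
def topVert (k : ℕ) : Fin k → Bool := fun _ => true

/-- An `(n+1)`-corner: a configuration whose restriction to every lower
codimension-1 face is an `n`-cube (the value at the top vertex is irrelevant). -/
def IsCubeCorner {X : Type*} (CS : Cubespace X) (n : ℕ) (lam : (Fin (n + 1) → Bool) → X) : Prop :=
  ∀ i : Fin (n + 1), (fun ω : Fin n → Bool => lam (i.insertNth false ω)) ∈ CS.C n

/-- `(n+1)`-completion: every `(n+1)`-corner can be completed to an `(n+1)`-cube. -/
def HasCompletion {X : Type*} (CS : Cubespace X) (n : ℕ) : Prop :=
  ∀ lam : (Fin (n + 1) → Bool) → X, IsCubeCorner CS n lam →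
    ∃ x : X, (fun ω => if ω = topVert (n + 1) then x else lam ω) ∈ CS.C (n + 1)

/-- `k`-uniqueness: two `k`-cubes agreeing at all vertices except the top vertex are equal. -/
def HasUniqueness {X : Type*} (CS : Cubespace X) (k : ℕ) : Prop :=
  ∀ c ∈ CS.C k, ∀ c' ∈ CS.C k, (∀ ω, ω ≠ topVert k → c ω = c' ω) → c = c'

/-- The glueing property: two `(n+1)`-cubes agreeing along a common codimension-1 face
can be glued to form another `(n+1)`-cube. -/
def HasGlueing {X : Type*} (CS : Cubespace X) : Prop :=
  ∀ (n : ℕ) (c c' : (Fin (n + 1) → Bool) → X), c ∈ CS.C (n + 1) → c' ∈ CS.C (n + 1) →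
    (∀ ω : Fin n → Bool, c (Fin.snoc ω true) = c' (Fin.snoc ω false)) →
    (fun ω : Fin (n + 1) → Bool => if ω (Fin.last n) = true then c' ω else c ω) ∈ CS.C (n + 1)

/-- A cubespace morphism: maps `k`-cubes to `k`-cubes for every `k`. -/
def IsMorphism {X Y : Type*} (CX : Cubespace X) (CY : Cubespace Y) (f : X → Y) : Prop :=
  ∀ k : ℕ, ∀ c ∈ CX.C k, (fun ω => f (c ω)) ∈ CY.C k

/-- A fibration: a cubespace morphism such that every corner of `X` lying over
(all but the top vertex of) a cube of `Y` can be completed to a cube of `X`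
mapping onto that cube.  (The `k = 0` case of corner completion is surjectivity.) -/
def IsFibration {X Y : Type*} (CX : Cubespace X) (CY : Cubespace Y) (f : X → Y) : Prop :=
  IsMorphism CX CY f ∧ Function.Surjective f ∧
  ∀ (n : ℕ) (lam : (Fin (n + 1) → Bool) → X) (c : (Fin (n + 1) → Bool) → Y),
    IsCubeCorner CX n lam → c ∈ CY.C (n + 1) →
    (∀ ω, ω ≠ topVert (n + 1) → f (lam ω) = c ω) →
    ∃ x : X, f x = c (topVert (n + 1)) ∧
      (fun ω => if ω = topVert (n + 1) then x else lam ω) ∈ CX.C (n + 1)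

/-- A face embedding `{0,1}^m → {0,1}^k`: an embedding of a subcube of `{0,1}^k` obtained by
fixing the coordinates off the range of `ι` to the values `ε`. -/
def IsFaceEmbedding {m k : ℕ} (φ : (Fin m → Bool) → (Fin k → Bool)) : Prop :=
  ∃ (ι : Fin m ↪ Fin k) (ε : Fin k → Bool), ∀ α : Fin m → Bool,
    (∀ t, φ α (ι t) = α t) ∧ ∀ j, j ∉ Set.range ι → φ α j = ε j

theorem isCubeMorphism_of_faceEmbedding {m k : ℕ} {φ : (Fin m → Bool) → (Fin k → Bool)}
    (h : IsFaceEmbedding φ) : IsCubeMorphism φ := by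
  obtain ⟨ι, ε, hφ⟩ := h
  intro i
  by_cases hi : i ∈ Set.range ι
  · obtain ⟨t, ht⟩ := hi
    exact Or.inr (Or.inr (Or.inl ⟨t, fun ω => by rw [← ht, (hφ ω).1 t]⟩))
  · cases hε : ε i with
    | false => exact Or.inl fun ω => by rw [(hφ ω).2 i hi, hε]
    | true => exact Or.inr (Or.inl fun ω => by rw [(hφ ω).2 i hi, hε])

theorem faceEmbedding_insertNth {m k : ℕ} {φ : (Fin m → Bool) → (Fin k → Bool)}
    (h : IsFaceEmbedding φ) (i : Fin (k + 1)) (b : Bool) :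
    IsFaceEmbedding (fun α => i.insertNth b (φ α)) := by
  obtain ⟨ι, ε, hφ⟩ := h
  refine ⟨ι.trans (Fin.succAboveEmb i), i.insertNth b ε, fun α => ⟨fun t => ?_, fun j hj => ?_⟩⟩
  · simp only [Function.Embedding.trans_apply, Fin.succAboveEmb_apply]
    rw [Fin.insertNth_apply_succAbove, (hφ α).1 t]
  · rcases eq_or_ne j i with rfl | hne
    · simp [Fin.insertNth_apply_same]
    · obtain ⟨t, rfl⟩ := Fin.exists_succAbove_eq hne
      simp only [Fin.insertNth_apply_succAbove]
      apply (hφ α).2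
      rintro ⟨u, rfl⟩
      exact hj ⟨u, by simp [Function.Embedding.trans_apply]⟩

/-- The embedding of `{0,1}^s` into `{0,1}^k` as the top face on the first `s` coordinates. -/
def topFaceMap (s k : ℕ) : (Fin s → Bool) → (Fin k → Bool) :=
  fun α j => if hj : (j : ℕ) < s then α ⟨j, hj⟩ else true

theorem topFaceMap_castLE {s k : ℕ} (h : s ≤ k) (α : Fin s → Bool) (t : Fin s) :
    topFaceMap s k α (Fin.castLE h t) = α t := by
  simp [topFaceMap, t.isLt]

theorem topFaceMap_isFaceEmbedding {s k : ℕ} (h : s ≤ k) :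
    IsFaceEmbedding (topFaceMap s k) := by
  refine ⟨Fin.castLEEmb h, fun _ => true, fun α => ⟨fun t => topFaceMap_castLE h α t,
    fun j hj => ?_⟩⟩
  have : ¬ (j : ℕ) < s := fun hlt => hj ⟨⟨j, hlt⟩, by ext; simp⟩
  simp [topFaceMap, this]

theorem topFaceMap_top (s k : ℕ) : topFaceMap s k (topVert s) = topVert k := by
  funext j
  simp [topFaceMap, topVert]

/-- In a nilspace of degree `s` (a cubespace with `(s+1)`-uniqueness and
`k`-completion for all `k`), for `k ≥ s + 1`, a configuration on `{0,1}^k` is a cube if and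
only if all its faces of dimension `s+1` are cubes. -/
theorem high_cubes_boring {X : Type*} (CS : Cubespace X) (s : ℕ)
    (huniq : HasUniqueness CS (s + 1)) (hcomp : ∀ n, HasCompletion CS n)
    (k : ℕ) (hk : s + 1 ≤ k) (c : (Fin k → Bool) → X) :
    c ∈ CS.C k ↔ ∀ φ : (Fin (s + 1) → Bool) → (Fin k → Bool),
      IsFaceEmbedding φ → (c ∘ φ) ∈ CS.C (s + 1) := by
  constructor
  · intro hc φ hφ
    exact CS.C_morph φ (isCubeMorphism_of_faceEmbedding hφ) c hc
  · induction k, hk using Nat.le_induction with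
    | base =>
      intro hface
      have h1 := hface (topFaceMap (s+1) (s+1)) (topFaceMap_isFaceEmbedding le_rfl)
      have h2 : c ∘ topFaceMap (s+1) (s+1) = c := by
        funext ω
        show c (topFaceMap (s+1) (s+1) ω) = c ω
        congr 1
        funext j
        simp [topFaceMap]
        exact fun h => absurd j.isLt (by omega)
      rwa [h2] at h1
    | succ m hm ih =>
      intro hface
      have hcorner : IsCubeCorner CS m c := by
        intro i
        apply ih (fun ω : Fin m → Bool => c (i.insertNth false ω))
        intro ψ hψ
        exact hface (fun α => i.insertNth false (ψ α)) (faceEmbedding_insertNth hψ i false)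
      obtain ⟨x, hx⟩ := hcomp m c hcorner
      set c' := fun ω => if ω = topVert (m+1) then x else c ω with hc'
      have hle : s + 1 ≤ m + 1 := le_trans hm (Nat.le_succ m)
      set ψ := topFaceMap (s+1) (m+1) with hψdef
      have hψ := topFaceMap_isFaceEmbedding hle
      have h1 : (c ∘ ψ) ∈ CS.C (s+1) := hface ψ hψ
      have h2 : (c' ∘ ψ) ∈ CS.C (s+1) := CS.C_morph ψ (isCubeMorphism_of_faceEmbedding hψ) c' hx
      have hψtop : ψ (topVert (s+1)) = topVert (m+1) := topFaceMap_top _ _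
      have hagree : ∀ α, α ≠ topVert (s+1) → (c ∘ ψ) α = (c' ∘ ψ) α := by
        intro α hα
        have hne : ψ α ≠ topVert (m+1) := by
          intro h
          apply hα
          funext t
          have ht := congrFun h (Fin.castLE hle t)
          rw [hψdef, topFaceMap_castLE hle α t] at ht
          exact ht
        simp only [Function.comp_apply, hc']
        rw [if_neg hne]
      have heq := huniq _ h1 _ h2 hagree
      have hx_top : x = c (topVert (m+1)) := by
        have h3 := congrFun heq (topVert (s+1))
        simp only [Function.comp_apply, hψtop, hc', if_pos rfl] at h3
        exact h3.symm
      have hcc : c' = c := by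
        funext ω
        by_cases h : ω = topVert (m+1) <;> simp [hc', h, hx_top]
      rwa [hcc] at hx
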